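/- arXiv:1910.08966 — 4 statements merged into one kernel-verified Lean document; each statement's English description precedes it below -/
import Mathlib

section
/- For the Dunkl–Polychronakos operators D_i = x_i ∂/∂x_i + β Σ_{j≠i} x_i/(x_i−x_j)(1−K_{ij}) on C[x_1,...,x_N], the commutator satisfies [D_i, D_j] = β (D_j − D_i) K_{ij} for all i ≠ j. -/
open MvPolynomial

variable {N : ℕ}

private lemma dk_cancel {a b : Fin N} (h : a ≠ b) {u v : MvPolynomial (Fin N) ℂ}
    (H : (X a - X b) * u = (X a - X b) * v) : u = v :=
  mul_left_cancel₀ (sub_ne_zero.mpr (fun e => h (X_injective e))) H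

private lemma dk_swsw (a b : Fin N) (f : MvPolynomial (Fin N) ℂ) :
    rename (Equiv.swap a b) (rename (Equiv.swap a b) f) = f := by
  rw [rename_rename]
  have h : (⇑(Equiv.swap a b) ∘ ⇑(Equiv.swap a b)) = id := by
    funext x; simp [Equiv.swap_apply_self]
  rw [h, rename_id, AlgHom.id_apply]

private lemma dk_swap_conj (a b c d : Fin N) (f : MvPolynomial (Fin N) ℂ) :
    rename (Equiv.swap a b) (rename (Equiv.swap c d) f)
      = rename (Equiv.swap (Equiv.swap a b c) (Equiv.swap a b d)) (rename (Equiv.swap a b) f) := by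
  rw [rename_rename, rename_rename]
  have hfun : (⇑(Equiv.swap a b) ∘ ⇑(Equiv.swap c d))
      = (⇑(Equiv.swap (Equiv.swap a b c) (Equiv.swap a b d)) ∘ ⇑(Equiv.swap a b)) := by
    funext x
    simp [Equiv.swap_apply_apply, Equiv.Perm.mul_apply]
  rw [hfun]

private lemma dk_pderiv_comm (i j : Fin N) (f : MvPolynomial (Fin N) ℂ) :
    pderiv i (pderiv j f) = pderiv j (pderiv i f) := by
  induction f using MvPolynomial.induction_on with
  | C a => simp
  | add p q hp hq => simp [hp, hq]
  | mul_X p k hp =>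
      simp only [pderiv_mul, map_add, pderiv_X, Pi.single_apply]
      split_ifs <;> simp [hp] <;> ring

private lemma dk_pderiv_fix {a c d : Fin N} (hac : a ≠ c) (had : a ≠ d)
    (f : MvPolynomial (Fin N) ℂ) :
    pderiv a (rename (Equiv.swap c d) f) = rename (Equiv.swap c d) (pderiv a f) := by
  have h : Equiv.swap c d a = a := Equiv.swap_apply_of_ne_of_ne hac had
  conv_lhs => rw [← h]
  exact pderiv_rename (Equiv.injective _) a f

private lemma dk_renameE (a b c : Fin N) (f : MvPolynomial (Fin N) ℂ) :
    rename (Equiv.swap a b) (X c * pderiv c f)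
      = X (Equiv.swap a b c) * pderiv (Equiv.swap a b c) (rename (Equiv.swap a b) f) := by
  rw [map_mul, rename_X, pderiv_rename (Equiv.injective _)]

section withT
variable (T : Fin N → Fin N → MvPolynomial (Fin N) ℂ →ₗ[ℂ] MvPolynomial (Fin N) ℂ)
variable (hT : ∀ i j, i ≠ j → ∀ f,
    (X i - X j) * T i j f = X i * (f - rename (Equiv.swap i j) f))

include hT

private lemma dk_conj {a b c d : Fin N} (hcd : c ≠ d) (f : MvPolynomial (Fin N) ℂ) :
    rename (Equiv.swap a b) (T c d f)
      = T (Equiv.swap a b c) (Equiv.swap a b d) (rename (Equiv.swap a b) f) := by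
  have hcd' : Equiv.swap a b c ≠ Equiv.swap a b d :=
    fun e => hcd ((Equiv.swap a b).injective e)
  apply dk_cancel hcd'
  rw [hT _ _ hcd']
  have h1 : (X (Equiv.swap a b c) - X (Equiv.swap a b d)) * rename (Equiv.swap a b) (T c d f)
      = rename (Equiv.swap a b) ((X c - X d) * T c d f) := by
    rw [map_mul, map_sub, rename_X, rename_X]
  rw [h1, hT c d hcd f, map_mul, map_sub, rename_X, dk_swap_conj]

/-- `[E_a, T_{cd}] = 0` when `a ∉ {c,d}`. -/
private lemma dk_ET {a c d : Fin N} (hcd : c ≠ d) (hac : a ≠ c) (had : a ≠ d)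
    (f : MvPolynomial (Fin N) ℂ) :
    X a * pderiv a (T c d f) = T c d (X a * pderiv a f) := by
  apply dk_cancel hcd
  have q3 := congrArg (pderiv a) (hT c d hcd f)
  rw [pderiv_mul, pderiv_mul, map_sub, map_sub, pderiv_X_of_ne (Ne.symm hac),
    pderiv_X_of_ne (Ne.symm had), dk_pderiv_fix hac had] at q3
  have q2 := hT c d hcd (X a * pderiv a f)
  have h : Equiv.swap c d a = a := Equiv.swap_apply_of_ne_of_ne hac had
  have hr : rename (Equiv.swap c d) (X a * pderiv a f)
      = X a * rename (Equiv.swap c d) (pderiv a f) := by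
    rw [map_mul, rename_X, h]
  rw [hr] at q2
  rw [q2]
  linear_combination (X a) * q3

end withT

private lemma dk_Ecomm {i j : Fin N} (hij : i ≠ j) (f : MvPolynomial (Fin N) ℂ) :
    X i * pderiv i (X j * pderiv j f) = X j * pderiv j (X i * pderiv i f) := by
  rw [pderiv_mul, pderiv_mul, pderiv_X_of_ne hij, pderiv_X_of_ne hij.symm,
    dk_pderiv_comm i j]
  ring

private lemma dk_tri1 {a b c : Fin N} (hba : b ≠ a) (hbc : b ≠ c)
    (f : MvPolynomial (Fin N) ℂ) :
    rename (Equiv.swap a b) (rename (Equiv.swap a c) f)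
      = rename (Equiv.swap a c) (rename (Equiv.swap b c) f) := by
  conv_rhs => rw [dk_swap_conj a c b c f]
  rw [Equiv.swap_apply_of_ne_of_ne hba hbc, Equiv.swap_apply_right, Equiv.swap_comm b a]

private lemma dk_tri2 {a b c : Fin N} (hab : a ≠ b) (hac : a ≠ c) (hbc : b ≠ c)
    (f : MvPolynomial (Fin N) ℂ) :
    rename (Equiv.swap a b) (rename (Equiv.swap a c) f)
      = rename (Equiv.swap b c) (rename (Equiv.swap a b) f) := by
  conv_rhs => rw [dk_swap_conj b c a b f]
  rw [Equiv.swap_apply_of_ne_of_ne hab hac, Equiv.swap_apply_left,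
    dk_tri1 hab.symm hbc]


section withT2
variable (T : Fin N → Fin N → MvPolynomial (Fin N) ℂ →ₗ[ℂ] MvPolynomial (Fin N) ℂ)
variable (hT : ∀ i j, i ≠ j → ∀ f,
    (X i - X j) * T i j f = X i * (f - rename (Equiv.swap i j) f))
include hT

private lemma dk_keyA {i j : Fin N} (hij : i ≠ j) (f : MvPolynomial (Fin N) ℂ) :
    (X i * pderiv i (T j i f) - T j i (X i * pderiv i f))
      - (X j * pderiv j (T i j f) - T i j (X j * pderiv j f))
    = X j * pderiv j (rename (Equiv.swap i j) f)
      - X i * pderiv i (rename (Equiv.swap i j) f) := by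
  have hd : (X i - X j : MvPolynomial (Fin N) ℂ) ≠ 0 :=
    sub_ne_zero.mpr fun e => hij (X_injective e)
  have g1 := hT i j hij f
  have g2 := hT j i hij.symm f
  rw [Equiv.swap_comm j i] at g2
  have g3 := hT i j hij (X j * pderiv j f)
  rw [dk_renameE, Equiv.swap_apply_right] at g3
  have g4 := hT j i hij.symm (X i * pderiv i f)
  rw [Equiv.swap_comm j i, dk_renameE, Equiv.swap_apply_left] at g4
  have g5 := congrArg (pderiv j) g1
  rw [pderiv_mul, pderiv_mul, map_sub, map_sub, pderiv_X_of_ne hij, pderiv_X_self] at g5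
  have g6 := congrArg (pderiv i) g2
  rw [pderiv_mul, pderiv_mul, map_sub, map_sub, pderiv_X_of_ne hij.symm, pderiv_X_self] at g6
  apply mul_left_cancel₀ (mul_ne_zero hd hd)
  linear_combination (-(X j)) * g1 + X i * g2 + (X i - X j) * g3 + (X i - X j) * g4
    + (-(X i - X j) * X j) * g5 + (-(X i - X j) * X i) * g6

private lemma dk_pair {i j : Fin N} (hij : i ≠ j) (f : MvPolynomial (Fin N) ℂ) :
    T i j (T j i f) - T j i (T i j f)
      = T j i (rename (Equiv.swap i j) f) - T i j (rename (Equiv.swap i j) f) := by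
  have hd : (X i - X j : MvPolynomial (Fin N) ℂ) ≠ 0 :=
    sub_ne_zero.mpr fun e => hij (X_injective e)
  have g1 := hT i j hij f
  have g2 := hT j i hij.symm f
  rw [Equiv.swap_comm j i] at g2
  have h1 := hT i j hij (T j i f)
  rw [dk_conj T hT hij.symm, Equiv.swap_apply_right, Equiv.swap_apply_left] at h1
  have h2 := hT j i hij.symm (T i j f)
  rw [Equiv.swap_comm j i, dk_conj T hT hij, Equiv.swap_apply_left, Equiv.swap_apply_right] at h2
  have h3 := hT i j hij (rename (Equiv.swap i j) f)
  rw [dk_swsw] at h3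
  have h4 := hT j i hij.symm (rename (Equiv.swap i j) f)
  rw [Equiv.swap_comm j i, dk_swsw] at h4
  apply mul_left_cancel₀ (mul_ne_zero hd hd)
  linear_combination (X i - X j) * h1 + (X i - X j) * h2 + (-(X j)) * h3 + X i * h4
    + (-(X i)) * g2 + X j * g1

private lemma dk_disj {i j k l : Fin N} (hij : i ≠ j) (hik : i ≠ k) (hil : i ≠ l)
    (hjk : j ≠ k) (hjl : j ≠ l) (hkl : k ≠ l) (f : MvPolynomial (Fin N) ℂ) :
    T i k (T j l f) = T j l (T i k f) := by
  have hdik : (X i - X k : MvPolynomial (Fin N) ℂ) ≠ 0 :=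
    sub_ne_zero.mpr fun e => hik (X_injective e)
  have hdjl : (X j - X l : MvPolynomial (Fin N) ℂ) ≠ 0 :=
    sub_ne_zero.mpr fun e => hjl (X_injective e)
  have p1 := hT i k hik (T j l f)
  rw [dk_conj T hT hjl, Equiv.swap_apply_of_ne_of_ne hij.symm hjk,
    Equiv.swap_apply_of_ne_of_ne hil.symm (Ne.symm hkl)] at p1
  have p2 := hT j l hjl (T i k f)
  rw [dk_conj T hT hik, Equiv.swap_apply_of_ne_of_ne hij hil,
    Equiv.swap_apply_of_ne_of_ne hjk.symm hkl] at p2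
  have p3 := hT j l hjl f
  have p4 := hT i k hik f
  have p5 := hT j l hjl (rename (Equiv.swap i k) f)
  have p6 := hT i k hik (rename (Equiv.swap j l) f)
  rw [dk_swap_conj, Equiv.swap_apply_of_ne_of_ne hij.symm hjk,
    Equiv.swap_apply_of_ne_of_ne hil.symm hkl.symm] at p6
  apply mul_left_cancel₀ (mul_ne_zero hdik hdjl)
  linear_combination (X j - X l) * p1 - (X i - X k) * p2 + X i * p3 - X i * p5
    - X j * p4 + X j * p6

private lemma dk_key3 {i j m : Fin N} (hij : i ≠ j) (him : i ≠ m) (hjm : j ≠ m)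
    (f : MvPolynomial (Fin N) ℂ) :
    (T i m (T j m f) - T j m (T i m f)) + (T i j (T j m f) - T j m (T i j f))
      + (T i m (T j i f) - T j i (T i m f))
    = T j m (rename (Equiv.swap i j) f) - T i m (rename (Equiv.swap i j) f) := by
  have hdij : (X i - X j : MvPolynomial (Fin N) ℂ) ≠ 0 :=
    sub_ne_zero.mpr fun e => hij (X_injective e)
  have hdim : (X i - X m : MvPolynomial (Fin N) ℂ) ≠ 0 :=
    sub_ne_zero.mpr fun e => him (X_injective e)
  have hdjm : (X j - X m : MvPolynomial (Fin N) ℂ) ≠ 0 :=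
    sub_ne_zero.mpr fun e => hjm (X_injective e)
  have e1 := hT i m him (T j m f)
  rw [dk_conj T hT hjm, Equiv.swap_apply_of_ne_of_ne hij.symm hjm,
    Equiv.swap_apply_right] at e1
  have e2 := hT j m hjm (T i m f)
  rw [dk_conj T hT him, Equiv.swap_apply_of_ne_of_ne hij him,
    Equiv.swap_apply_right] at e2
  have e3 := hT i j hij (T j m f)
  rw [dk_conj T hT hjm, Equiv.swap_apply_right,
    Equiv.swap_apply_of_ne_of_ne him.symm hjm.symm] at e3
  have e4 := hT j m hjm (T i j f)
  rw [dk_conj T hT hij, Equiv.swap_apply_of_ne_of_ne hij him,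
    Equiv.swap_apply_left] at e4
  have e5 := hT i m him (T j i f)
  rw [dk_conj T hT hij.symm, Equiv.swap_apply_of_ne_of_ne hij.symm hjm,
    Equiv.swap_apply_left] at e5
  have e6 := hT j i hij.symm (T i m f)
  rw [Equiv.swap_comm j i, dk_conj T hT him, Equiv.swap_apply_left,
    Equiv.swap_apply_of_ne_of_ne him.symm hjm.symm] at e6
  have e7 := hT j m hjm f
  have e8 := hT j i hij.symm (rename (Equiv.swap i m) f)
  rw [Equiv.swap_comm j i] at e8
  have e9 := hT i m him f
  have e10 := hT i j hij (rename (Equiv.swap j m) f)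
  have e11 := hT i j hij f
  have e12 := hT i m him (rename (Equiv.swap j m) f)
  rw [← dk_tri1 hij.symm hjm] at e12
  have e13 := hT j i hij.symm f
  rw [Equiv.swap_comm j i] at e13
  have e14 := hT j m hjm (rename (Equiv.swap i m) f)
  rw [← dk_tri1 hij him, Equiv.swap_comm j i] at e14
  have e15 := hT j m hjm (rename (Equiv.swap i j) f)
  rw [← dk_tri2 hij him hjm] at e15
  have e16 := hT i m him (rename (Equiv.swap i j) f)
  rw [Equiv.swap_comm i j, ← dk_tri2 hij.symm hjm him, Equiv.swap_comm j i] at e16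
  apply mul_left_cancel₀ (mul_ne_zero (mul_ne_zero hdij hdim) hdjm)
  linear_combination ((X i - X j)*(X j - X m))*e1 - ((X i - X j)*(X i - X m))*e2
    + ((X i - X m)*(X j - X m))*e3 - ((X i - X j)*(X i - X m))*e4
    + ((X i - X j)*(X j - X m))*e5 + ((X i - X m)*(X j - X m))*e6
    + (X i*(2*X i - X j - X m))*e7 + (X i*(X j - X m))*e8
    + (X j*(2*X j - X i - X m))*e9 + ((X i - X m)*X j)*e10
    - ((X i - X m)*X j)*e11 + ((X i - X j)*X j)*e12 - (X i*(X j - X m))*e13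
    - (X i*(X i - X j))*e14 - (X i*(X i - X m))*e15 - (X j*(X j - X m))*e16

end withT2

/-- For the Dunkl–Polychronakos operators
`D_i = x_i ∂/∂x_i + β Σ_{j≠i} (x_i/(x_i−x_j)) (1 − K_{ij})` on `ℂ[x_1,…,x_N]`,
the commutator satisfies `[D_i, D_j] = β (D_j − D_i) K_{ij}` for `i ≠ j`.
The divided-difference part is encoded by linear maps `T i j` characterized
(uniquely, since the polynomial ring is a domain) by
`(x_i − x_j) · (T i j f) = x_i · (f − K_{ij} f)`. -/
theorem dunkl_commutator_relation {N : ℕ} (β : ℂ)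
    (T : Fin N → Fin N → MvPolynomial (Fin N) ℂ →ₗ[ℂ] MvPolynomial (Fin N) ℂ)
    (hT : ∀ i j, i ≠ j → ∀ f,
      (X i - X j) * T i j f = X i * (f - rename (Equiv.swap i j) f))
    (D : Fin N → MvPolynomial (Fin N) ℂ →ₗ[ℂ] MvPolynomial (Fin N) ℂ)
    (hD : ∀ i f, D i f =
      X i * pderiv i f + β • ∑ j ∈ Finset.univ.filter (· ≠ i), T i j f) :
    ∀ i j, i ≠ j → ∀ f : MvPolynomial (Fin N) ℂ,
      D i (D j f) - D j (D i f) =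
        β • (D j (rename (Equiv.swap i j) f) - D i (rename (Equiv.swap i j) f)) := by
  intro i j hij f
  have hTC : ∀ (a b : Fin N) (x : MvPolynomial (Fin N) ℂ),
      T a b (C β * x) = C β * T a b x := by
    intro a b x
    rw [← smul_eq_C_mul, map_smul, smul_eq_C_mul]
  have hD' : ∀ (a : Fin N) (g : MvPolynomial (Fin N) ℂ), D a g
      = X a * pderiv a g + C β * ∑ k ∈ Finset.univ.filter (· ≠ a), T a k g := by
    intro a g; rw [hD a g, smul_eq_C_mul]
  rw [hD' i (D j f), hD' j (D i f), hD' j f, hD' i f,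
    hD' j (rename (Equiv.swap i j) f), hD' i (rename (Equiv.swap i j) f),
    smul_eq_C_mul]
  simp only [map_add, map_sum, pderiv_C_mul, hTC, mul_add, Finset.sum_add_distrib,
    ← Finset.mul_sum]
  have hiSj : i ∈ Finset.filter (fun x => x ≠ j) Finset.univ := by simp [hij]
  have hjSi : j ∈ Finset.filter (fun x => x ≠ i) Finset.univ := by simp [hij.symm]
  set M : Finset (Fin N) := Finset.univ.filter (fun x => x ≠ i ∧ x ≠ j) with hM
  have hiM : i ∉ M := by simp [hM]
  have hjM : j ∉ M := by simp [hM]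
  have hSi : Finset.filter (fun x => x ≠ i) Finset.univ = insert j M := by
    ext x
    simp only [hM, Finset.mem_filter, Finset.mem_univ, true_and, Finset.mem_insert]
    constructor
    · intro hx
      by_cases h : x = j
      · exact Or.inl h
      · exact Or.inr ⟨hx, h⟩
    · rintro (rfl | ⟨h1, h2⟩)
      · exact hij.symm
      · exact h1
  have hSj : Finset.filter (fun x => x ≠ j) Finset.univ = insert i M := by
    ext x
    simp only [hM, Finset.mem_filter, Finset.mem_univ, true_and, Finset.mem_insert]
    constructor
    · intro hx
      by_cases h : x = i
      · exact Or.inl h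
      · exact Or.inr ⟨h, hx⟩
    · rintro (rfl | ⟨h1, h2⟩)
      · exact hij
      · exact h2
  have h1 : ∑ l ∈ Finset.filter (fun x => x ≠ j) Finset.univ,
      (X i * pderiv i (T j l f) - T j l (X i * pderiv i f))
      = X i * pderiv i (T j i f) - T j i (X i * pderiv i f) := by
    apply Finset.sum_eq_single_of_mem i hiSj
    intro l hl hli
    have hlj : l ≠ j := by simpa using hl
    rw [dk_ET T hT (Ne.symm hlj) hij (Ne.symm hli), sub_self]
  have h2 : ∑ k ∈ Finset.filter (fun x => x ≠ i) Finset.univ,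
      (T i k (X j * pderiv j f) - X j * pderiv j (T i k f))
      = T i j (X j * pderiv j f) - X j * pderiv j (T i j f) := by
    apply Finset.sum_eq_single_of_mem j hjSi
    intro k hk hkj
    have hki : k ≠ i := by simpa using hk
    rw [dk_ET T hT (Ne.symm hki) hij.symm (Ne.symm hkj), sub_self]
  have HA : X i * ∑ x ∈ Finset.filter (fun x => x ≠ j) Finset.univ, pderiv i (T j x f)
      + ∑ x ∈ Finset.filter (fun x => x ≠ i) Finset.univ, T i x (X j * pderiv j f)
      - X j * ∑ x ∈ Finset.filter (fun x => x ≠ i) Finset.univ, pderiv j (T i x f)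
      - ∑ x ∈ Finset.filter (fun x => x ≠ j) Finset.univ, T j x (X i * pderiv i f)
      = X j * pderiv j (rename (Equiv.swap i j) f)
        - X i * pderiv i (rename (Equiv.swap i j) f) := by
    have l1 : X i * ∑ x ∈ Finset.filter (fun x => x ≠ j) Finset.univ, pderiv i (T j x f)
        - ∑ x ∈ Finset.filter (fun x => x ≠ j) Finset.univ, T j x (X i * pderiv i f)
        = ∑ l ∈ Finset.filter (fun x => x ≠ j) Finset.univ,
            (X i * pderiv i (T j l f) - T j l (X i * pderiv i f)) := by
      rw [Finset.mul_sum, ← Finset.sum_sub_distrib]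
    have l2 : ∑ x ∈ Finset.filter (fun x => x ≠ i) Finset.univ, T i x (X j * pderiv j f)
        - X j * ∑ x ∈ Finset.filter (fun x => x ≠ i) Finset.univ, pderiv j (T i x f)
        = ∑ k ∈ Finset.filter (fun x => x ≠ i) Finset.univ,
            (T i k (X j * pderiv j f) - X j * pderiv j (T i k f)) := by
      rw [Finset.mul_sum, ← Finset.sum_sub_distrib]
    linear_combination l1 + l2 + h1 + h2 + dk_keyA T hT hij f
  have inner_eval : ∀ k ∈ M, ∑ l ∈ M, (T i k (T j l f) - T j l (T i k f))
      = T i k (T j k f) - T j k (T i k f) := by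
    intro k hk
    obtain ⟨hki, hkj⟩ := (Finset.mem_filter.mp hk).2
    apply Finset.sum_eq_single_of_mem k hk
    intro l hl hlk
    obtain ⟨hli, hlj⟩ := (Finset.mem_filter.mp hl).2
    rw [dk_disj T hT hij (Ne.symm hki) (Ne.symm hli) (Ne.symm hkj) (Ne.symm hlj)
      (Ne.symm hlk), sub_self]
  have key3' : ∀ m ∈ M,
      (T i j (T j m f) - T j m (T i j f))
        + ((T i m (T j i f) - T j i (T i m f)) + (T i m (T j m f) - T j m (T i m f)))
      = T j m (rename (Equiv.swap i j) f) - T i m (rename (Equiv.swap i j) f) := by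
    intro m hm
    obtain ⟨hmi, hmj⟩ := (Finset.mem_filter.mp hm).2
    linear_combination dk_key3 T hT hij (Ne.symm hmi) (Ne.symm hmj) f
  have HB : (∑ k ∈ Finset.filter (fun x => x ≠ i) Finset.univ,
        ∑ l ∈ Finset.filter (fun x => x ≠ j) Finset.univ, T i k (T j l f))
      - (∑ l ∈ Finset.filter (fun x => x ≠ j) Finset.univ,
        ∑ k ∈ Finset.filter (fun x => x ≠ i) Finset.univ, T j l (T i k f))
      = (∑ l ∈ Finset.filter (fun x => x ≠ j) Finset.univ,
          T j l (rename (Equiv.swap i j) f))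
        - (∑ k ∈ Finset.filter (fun x => x ≠ i) Finset.univ,
          T i k (rename (Equiv.swap i j) f)) := by
    have hc : (∑ l ∈ Finset.filter (fun x => x ≠ j) Finset.univ,
        ∑ k ∈ Finset.filter (fun x => x ≠ i) Finset.univ, T j l (T i k f))
        = ∑ k ∈ Finset.filter (fun x => x ≠ i) Finset.univ,
          ∑ l ∈ Finset.filter (fun x => x ≠ j) Finset.univ, T j l (T i k f) :=
      Finset.sum_comm
    rw [hc, ← Finset.sum_sub_distrib]
    simp only [← Finset.sum_sub_distrib]
    rw [hSi, hSj]
    simp only [Finset.sum_insert hjM, Finset.sum_insert hiM]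
    have hinner : ∑ k ∈ M, ((T i k (T j i f) - T j i (T i k f))
          + ∑ l ∈ M, (T i k (T j l f) - T j l (T i k f)))
        = ∑ k ∈ M, ((T i k (T j i f) - T j i (T i k f))
          + (T i k (T j k f) - T j k (T i k f))) := by
      refine Finset.sum_congr rfl fun k hk => ?_
      rw [inner_eval k hk]
    rw [hinner]
    have comb : (∑ m ∈ M, (T i j (T j m f) - T j m (T i j f)))
          + ∑ m ∈ M, ((T i m (T j i f) - T j i (T i m f))
              + (T i m (T j m f) - T j m (T i m f)))
        = ∑ m ∈ M, ((T i j (T j m f) - T j m (T i j f))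
          + ((T i m (T j i f) - T j i (T i m f)) + (T i m (T j m f) - T j m (T i m f)))) :=
      Finset.sum_add_distrib.symm
    have hfin : ∑ m ∈ M, ((T i j (T j m f) - T j m (T i j f))
          + ((T i m (T j i f) - T j i (T i m f)) + (T i m (T j m f) - T j m (T i m f))))
        = ∑ m ∈ M, (T j m (rename (Equiv.swap i j) f)
            - T i m (rename (Equiv.swap i j) f)) :=
      Finset.sum_congr rfl fun m hm => key3' m hm
    have hsub : ∑ m ∈ M, (T j m (rename (Equiv.swap i j) f)
            - T i m (rename (Equiv.swap i j) f))
        = (∑ m ∈ M, T j m (rename (Equiv.swap i j) f))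
          - ∑ m ∈ M, T i m (rename (Equiv.swap i j) f) :=
      Finset.sum_sub_distrib _ _
    linear_combination comb + hfin + hsub + dk_pair T hT hij f
  linear_combination dk_Ecomm hij f + C β * HA + (C β * C β) * HB
end

section
/- Define E_{ab,n} = Σ_{k+l=n} :ψ*_{a,l} ψ_{b,k}: in the completed free fermion algebra acting on the fermionic Fock space F^s, where :ψ*_{c,n}ψ_{d,m}: = ψ*_{c,n}ψ_{d,m} if m ≥ 0 and = −ψ_{d,m}ψ*_{c,n} if m < 0. Then these operators satisfy [E_{ab,n}, E_{cd,m}] = δ_{bc} E_{ad,n+m} − δ_{ad} E_{cb,n+m} + n δ_{n,−m} δ_{ad} δ_{bc}, i.e. they define a level-one representation of the affine Lie algebra gl_s^. -/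
/-- Commutator of fermionic bilinears: if `{B,C} = ε₁`, `{A,D} = ε₂`, `{A,C} = 0`,
`{B,D} = 0` and `ε₁, ε₂` are central, then `[AB, CD] = ε₁ AD - ε₂ CB`. -/
lemma comm4_aux {R : Type*} [Ring R] (A B C D ε1 ε2 : R)
    (h1 : B*C + C*B = ε1) (h2 : A*D + D*A = ε2)
    (h3 : A*C + C*A = 0) (h4 : B*D + D*B = 0)
    (hc1 : ∀ x : R, ε1 * x = x * ε1) (hc2 : ∀ x : R, ε2 * x = x * ε2) :
    A*B*(C*D) - C*D*(A*B) = ε1*(A*D) - ε2*(C*B) := by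
  have e1 : B*C = ε1 - C*B := eq_sub_of_add_eq h1
  have e2 : A*D = ε2 - D*A := eq_sub_of_add_eq h2
  have e3 : A*C = -(C*A) := eq_neg_of_add_eq_zero_left h3
  have e4 : B*D = -(D*B) := eq_neg_of_add_eq_zero_left h4
  have step : A*B*(C*D) = ε1*(A*D) - ε2*(C*B) + C*D*(A*B) := by
    calc A*B*(C*D) = A*(B*C)*D := by noncomm_ring
    _ = A*(ε1 - C*B)*D := by rw [e1]
    _ = A*ε1*D - A*C*(B*D) := by noncomm_ring
    _ = ε1*(A*D) - A*C*(B*D) := by rw [← hc1 A, mul_assoc]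
    _ = ε1*(A*D) - (-(C*A))*(B*D) := by rw [e3]
    _ = ε1*(A*D) + C*(A*(B*D)) := by noncomm_ring
    _ = ε1*(A*D) + C*(A*(-(D*B))) := by rw [e4]
    _ = ε1*(A*D) - C*(A*D)*B := by noncomm_ring
    _ = ε1*(A*D) - C*(ε2 - D*A)*B := by rw [e2]
    _ = ε1*(A*D) - (C*ε2*B - C*D*(A*B)) := by noncomm_ring
    _ = ε1*(A*D) - (ε2*(C*B) - C*D*(A*B)) := by rw [← hc2 C, mul_assoc]
    _ = ε1*(A*D) - ε2*(C*B) + C*D*(A*B) := by noncomm_ring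
  rw [step]; noncomm_ring

/-- On the fermionic Fock space `F^s` (a module `M` over ℂ with
anticommuting fermion mode operators and a vacuum annihilated as usual), define
`E_{ab,n} = Σ_{k+l=n} :ψ*_{a,l} ψ_{b,k}:` with the normal ordering
`:ψ*_{c,l}ψ_{d,k}: = ψ*_{c,l}ψ_{d,k}` if `k ≥ 0` and `= −ψ_{d,k}ψ*_{c,l}` if `k < 0`;
on each vector only finitely many terms act nontrivially (hypothesis `hE`).
Then `[E_{ab,n}, E_{cd,m}] = δ_{bc} E_{ad,n+m} − δ_{ad} E_{cb,n+m} + n δ_{n,−m} δ_{ad} δ_{bc}`,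
i.e. the `E_{ab,n}` define a level-one representation of the affine Lie algebra `gl_s^`. -/
theorem affine_gl_level_one {M : Type*} [AddCommGroup M] [Module ℂ M] {s : ℕ}
    (ψ ψs : Fin s → ℤ → Module.End ℂ M)
    (hψψ : ∀ (a b : Fin s) (n m : ℤ), ψ a n * ψ b m + ψ b m * ψ a n = 0)
    (hψsψs : ∀ (a b : Fin s) (n m : ℤ), ψs a n * ψs b m + ψs b m * ψs a n = 0)
    (hψψs : ∀ (a b : Fin s) (n m : ℤ),
      ψ a n * ψs b m + ψs b m * ψ a n = if a = b ∧ n = -m then 1 else 0)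
    (vac : M)
    (hvac : ∀ (c : Fin s) (n : ℤ), 0 ≤ n → ψ c n vac = 0)
    (hvacs : ∀ (c : Fin s) (m : ℤ), 0 < m → ψs c m vac = 0)
    -- the normally ordered quadratic terms
    (no : Fin s → Fin s → ℤ → ℤ → Module.End ℂ M)
    (hno : ∀ a b l k, no a b l k =
      if 0 ≤ k then ψs a l * ψ b k else -(ψ b k * ψs a l))
    -- `E a b n` is the locally finite sum `Σ_{k} :ψ*_{a,n−k} ψ_{b,k}:`
    (E : Fin s → Fin s → ℤ → Module.End ℂ M)
    (hE : ∀ a b n (v : M), ∃ S : Finset ℤ,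
      (∀ k ∉ S, no a b (n - k) k v = 0) ∧ E a b n v = ∑ k ∈ S, no a b (n - k) k v) :
    ∀ (a b c d : Fin s) (n m : ℤ),
      E a b n * E c d m - E c d m * E a b n =
        (if b = c then E a d (n + m) else 0) -
          (if a = d then E c b (n + m) else 0) +
          (if n = -m ∧ a = d ∧ b = c then (n : ℂ) • (1 : Module.End ℂ M) else 0) := by
  -- normal ordering differs from the plain product by a (central) scalar
  have hno' : ∀ (a b : Fin s) (p k : ℤ), no a b p k
      = ψs a p * ψ b k - (if b = a ∧ k = -p ∧ k < 0 then 1 else 0) := by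
    intro a b p k
    rw [hno]
    by_cases hk : 0 ≤ k
    · rw [if_pos hk, if_neg (by rintro ⟨-, -, h⟩; omega), sub_zero]
    · rw [if_neg hk]
      have h := hψψs b a k p
      by_cases hc : b = a ∧ k = -p
      · rw [if_pos ⟨hc.1, hc.2, by omega⟩]
        rw [if_pos hc] at h
        rw [eq_sub_of_add_eq h, neg_sub]
      · rw [if_neg (by rintro ⟨h1, h2, -⟩; exact hc ⟨h1, h2⟩)]
        rw [if_neg hc] at h
        rw [eq_sub_of_add_eq h, neg_sub, sub_zero]
  intro a b c d n m
  -- the pointwise commutator of two normally ordered bilinears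
  have hcomm : ∀ k j : ℤ,
      no a b (n-k) k * no c d (m-j) j - no c d (m-j) j * no a b (n-k) k
        = (if b = c ∧ j = k + m then ψs a (n-k) * ψ d j else 0)
          - (if a = d ∧ j = k - n then ψs c (m-j) * ψ b k else 0) := by
    intro k j
    have h1 : ψ b k * ψs c (m-j) + ψs c (m-j) * ψ b k
        = (if b = c ∧ j = k + m then (1 : Module.End ℂ M) else 0) := by
      rw [hψψs b c k (m-j)]
      refine if_congr (and_congr_right fun _ => ?_) rfl rfl
      omega
    have h2 : ψs a (n-k) * ψ d j + ψ d j * ψs a (n-k)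
        = (if a = d ∧ j = k - n then (1 : Module.End ℂ M) else 0) := by
      rw [add_comm, hψψs d a j (n-k)]
      refine if_congr ?_ rfl rfl
      constructor
      · rintro ⟨h', h''⟩; exact ⟨h'.symm, by omega⟩
      · rintro ⟨h', h''⟩; exact ⟨h'.symm, by omega⟩
    have h3 : ψs a (n-k) * ψs c (m-j) + ψs c (m-j) * ψs a (n-k) = 0 := hψsψs a c (n-k) (m-j)
    have h4 : ψ b k * ψ d j + ψ d j * ψ b k = 0 := hψψ b d k j
    have hc1 : ∀ x : Module.End ℂ M,
        (if b = c ∧ j = k + m then (1 : Module.End ℂ M) else 0) * x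
          = x * (if b = c ∧ j = k + m then (1 : Module.End ℂ M) else 0) := by
      intro x; split <;> simp
    have hc2 : ∀ x : Module.End ℂ M,
        (if a = d ∧ j = k - n then (1 : Module.End ℂ M) else 0) * x
          = x * (if a = d ∧ j = k - n then (1 : Module.End ℂ M) else 0) := by
      intro x; split <;> simp
    have key := comm4_aux (ψs a (n-k)) (ψ b k) (ψs c (m-j)) (ψ d j) _ _ h1 h2 h3 h4 hc1 hc2
    -- remove the normal-ordering scalars
    rw [hno' a b (n-k) k, hno' c d (m-j) j]
    set α := (if b = a ∧ k = -(n-k) ∧ k < 0 then (1 : Module.End ℂ M) else 0) with hα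
    set β := (if d = c ∧ j = -(m-j) ∧ j < 0 then (1 : Module.End ℂ M) else 0) with hβ
    have hαc : ∀ x : Module.End ℂ M, α * x = x * α := by
      intro x; rw [hα]; split <;> simp
    have hβc : ∀ x : Module.End ℂ M, β * x = x * β := by
      intro x; rw [hβ]; split <;> simp
    have expand : (ψs a (n-k) * ψ b k - α) * (ψs c (m-j) * ψ d j - β)
        - (ψs c (m-j) * ψ d j - β) * (ψs a (n-k) * ψ b k - α)
        = ψs a (n-k) * ψ b k * (ψs c (m-j) * ψ d j)
          - ψs c (m-j) * ψ d j * (ψs a (n-k) * ψ b k)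
          + (β * (ψs a (n-k) * ψ b k) - (ψs a (n-k) * ψ b k) * β)
          + ((ψs c (m-j) * ψ d j) * α - α * (ψs c (m-j) * ψ d j))
          + (α * β - β * α) := by noncomm_ring
    rw [expand, hβc (ψs a (n-k) * ψ b k), hαc (ψs c (m-j) * ψ d j), hαc β]
    simp only [sub_self, add_zero]
    rw [key]
    congr 1 <;> (split <;> simp)
  -- fix a vector and supports
  refine LinearMap.ext fun v => ?_
  obtain ⟨T, hT0, hTs⟩ := hE c d m v
  obtain ⟨S₁, hS₁0, hS₁s⟩ := hE a b n (E c d m v)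
  obtain ⟨T', hT'0, hT's⟩ := hE a b n v
  obtain ⟨S₂, hS₂0, hS₂s⟩ := hE c d m (E a b n v)
  obtain ⟨Sad, hSad0, hSads⟩ := hE a d (n + m) v
  obtain ⟨Scb, hScb0, hScbs⟩ := hE c b (n + m) v
  set B0 : ℕ := (T ∪ S₁ ∪ T' ∪ S₂ ∪ Sad ∪ Scb).sup Int.natAbs with hB0
  set N : ℤ := (B0 : ℤ) + n.natAbs + m.natAbs + 1 with hNdef
  set K : Finset ℤ := Finset.Icc (-N) N with hKdef
  have hBmem : ∀ x ∈ T ∪ S₁ ∪ T' ∪ S₂ ∪ Sad ∪ Scb, x.natAbs ≤ B0 :=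
    fun x hx => Finset.le_sup hx
  have hTb : ∀ x ∈ T, x.natAbs ≤ B0 := fun x hx => hBmem x (by simp [hx])
  have hS₁b : ∀ x ∈ S₁, x.natAbs ≤ B0 := fun x hx => hBmem x (by simp [hx])
  have hT'b : ∀ x ∈ T', x.natAbs ≤ B0 := fun x hx => hBmem x (by simp [hx])
  have hS₂b : ∀ x ∈ S₂, x.natAbs ≤ B0 := fun x hx => hBmem x (by simp [hx])
  have hSadb : ∀ x ∈ Sad, x.natAbs ≤ B0 := fun x hx => hBmem x (by simp [hx])
  have hScbb : ∀ x ∈ Scb, x.natAbs ≤ B0 := fun x hx => hBmem x (by simp [hx])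
  have hmemK : ∀ x : ℤ, x.natAbs ≤ B0 → x ∈ K := by
    intro x hx; rw [hKdef, Finset.mem_Icc]; omega
  set R1 : Finset ℤ := Finset.Icc (max (-N) (-N+m)) (min N (N+m)) with hR1
  set R2 : Finset ℤ := Finset.Icc (max (-N) (-N+n)) (min N (N+n)) with hR2
  -- products expand into double sums over K
  have hA : E a b n (E c d m v) = ∑ k ∈ K, ∑ j ∈ K, no a b (n-k) k (no c d (m-j) j v) := by
    rw [hS₁s, Finset.sum_subset (fun x hx => hmemK x (hS₁b x hx))
      (fun x _ hx' => hS₁0 x hx')]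
    refine Finset.sum_congr rfl fun k _ => ?_
    rw [hTs, map_sum, Finset.sum_subset (fun x hx => hmemK x (hTb x hx))
      (fun j _ hj => by rw [hT0 j hj, map_zero])]
  have hB : E c d m (E a b n v) = ∑ k ∈ K, ∑ j ∈ K, no c d (m-j) j (no a b (n-k) k v) := by
    rw [hS₂s, Finset.sum_subset (fun x hx => hmemK x (hS₂b x hx))
      (fun x _ hx' => hS₂0 x hx')]
    rw [Finset.sum_comm]
    refine Finset.sum_congr rfl fun j _ => ?_
    rw [hT's, map_sum, Finset.sum_subset (fun x hx => hmemK x (hT'b x hx))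
      (fun k _ hk => by rw [hT'0 k hk, map_zero])]
  have hL : (E a b n * E c d m - E c d m * E a b n) v
      = (∑ k ∈ K, ∑ j ∈ K, if b = c ∧ j = k + m then (ψs a (n-k) * ψ d j) v else 0)
        - (∑ k ∈ K, ∑ j ∈ K, if a = d ∧ j = k - n then (ψs c (m-j) * ψ b k) v else 0) := by
    have h1 : (E a b n * E c d m - E c d m * E a b n) v
        = ∑ k ∈ K, ∑ j ∈ K,
            ((no a b (n-k) k * no c d (m-j) j - no c d (m-j) j * no a b (n-k) k) v) := by
      simp only [LinearMap.sub_apply, Module.End.mul_apply]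
      rw [hA, hB, ← Finset.sum_sub_distrib]
      refine Finset.sum_congr rfl fun k _ => ?_
      rw [← Finset.sum_sub_distrib]
    rw [h1, ← Finset.sum_sub_distrib]
    refine Finset.sum_congr rfl fun k _ => ?_
    rw [← Finset.sum_sub_distrib]
    refine Finset.sum_congr rfl fun j _ => ?_
    rw [hcomm k j]
    simp only [LinearMap.sub_apply, apply_ite (fun f : Module.End ℂ M => f v),
      LinearMap.zero_apply]
  -- first double sum
  have hSum1 : (∑ k ∈ K, ∑ j ∈ K, if b = c ∧ j = k + m then (ψs a (n-k) * ψ d j) v else 0)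
      = (if b = c then E a d (n+m) v else 0)
        + (if b = c ∧ d = a ∧ n + m = 0
            then ((R1.filter (fun r => r < 0)).card) • v else 0) := by
    by_cases hbc : b = c
    · subst hbc
      simp only [true_and, if_pos rfl]
      have hinner : ∀ k ∈ K, (∑ j ∈ K, if j = k + m then (ψs a (n-k) * ψ d j) v else 0)
          = if k + m ∈ K then (ψs a (n-k) * ψ d (k+m)) v else 0 := by
        intro k _
        exact Finset.sum_ite_eq' K (k+m) (fun j => (ψs a (n-k) * ψ d j) v)
      rw [Finset.sum_congr rfl hinner, ← Finset.sum_filter]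
      have himg : (K.filter (fun k => k + m ∈ K)).image (fun k => k + m) = R1 := by
        ext r
        simp only [Finset.mem_image, Finset.mem_filter, hKdef, Finset.mem_Icc, hR1]
        constructor
        · rintro ⟨x, ⟨⟨hx1, hx2⟩, hx3, hx4⟩, rfl⟩; omega
        · intro hr; exact ⟨r - m, by omega, by omega⟩
      have hre : (∑ k ∈ K.filter (fun k => k + m ∈ K), (ψs a (n-k) * ψ d (k+m)) v)
          = ∑ r ∈ R1, (ψs a (n+m-r) * ψ d r) v := by
        rw [← himg, Finset.sum_image (by intro x _ y _ h; exact add_right_cancel h)]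
        refine Finset.sum_congr rfl fun k _ => ?_
        have : n + m - (k + m) = n - k := by ring
        rw [this]
      rw [hre]
      have hsplit : ∀ r ∈ R1, (ψs a (n+m-r) * ψ d r) v
          = no a d (n+m-r) r v
            + (if d = a ∧ r = -(n+m-r) ∧ r < 0 then v else 0) := by
        intro r _
        rw [hno' a d (n+m-r) r]
        simp only [LinearMap.sub_apply]
        split
        · simp
        · simp
      rw [Finset.sum_congr rfl hsplit, Finset.sum_add_distrib]
      congr 1
      · rw [hSads]
        refine (Finset.sum_subset (fun x hx => ?_) (fun x _ hx' => hSad0 x hx')).symm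
        have := hSadb x hx
        rw [hR1, Finset.mem_Icc]; omega
      · by_cases hcond : d = a ∧ n + m = 0
        · rw [if_pos ⟨hcond.1, hcond.2⟩]
          have : ∀ r ∈ R1, (if d = a ∧ r = -(n+m-r) ∧ r < 0 then v else 0)
              = if r < 0 then v else 0 := by
            intro r _
            by_cases hr : r < 0
            · rw [if_pos hr, if_pos ⟨hcond.1, by omega, hr⟩]
            · rw [if_neg hr, if_neg (by rintro ⟨-, -, h⟩; exact hr h)]
          rw [Finset.sum_congr rfl this, ← Finset.sum_filter, Finset.sum_const]
        · rw [if_neg (by rintro ⟨h1, h2⟩; exact hcond ⟨h1, h2⟩)]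
          refine Finset.sum_eq_zero fun r _ => ?_
          rw [if_neg (by rintro ⟨h1, h2, -⟩; exact hcond ⟨h1, by omega⟩)]
    · simp only [hbc, false_and, if_neg (fun h : (b = c ∧ _) => hbc h.1), if_false]
      simp
  -- second double sum
  have hSum2 : (∑ k ∈ K, ∑ j ∈ K, if a = d ∧ j = k - n then (ψs c (m-j) * ψ b k) v else 0)
      = (if a = d then E c b (n+m) v else 0)
        + (if a = d ∧ b = c ∧ n + m = 0
            then ((R2.filter (fun r => r < 0)).card) • v else 0) := by
    by_cases had : a = d
    · subst had
      simp only [true_and, if_pos rfl]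
      have hinner : ∀ k ∈ K, (∑ j ∈ K, if j = k - n then (ψs c (m-j) * ψ b k) v else 0)
          = if k - n ∈ K then (ψs c (m-(k-n)) * ψ b k) v else 0 := by
        intro k _
        exact Finset.sum_ite_eq' K (k-n) (fun j => (ψs c (m-j) * ψ b k) v)
      rw [Finset.sum_congr rfl hinner, ← Finset.sum_filter]
      have hflt : K.filter (fun k => k - n ∈ K) = R2 := by
        ext x
        simp only [Finset.mem_filter, hKdef, Finset.mem_Icc, hR2]
        omega
      rw [hflt]
      have hre : (∑ k ∈ R2, (ψs c (m-(k-n)) * ψ b k) v)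
          = ∑ k ∈ R2, (ψs c (n+m-k) * ψ b k) v := by
        refine Finset.sum_congr rfl fun k _ => ?_
        have : m - (k - n) = n + m - k := by ring
        rw [this]
      rw [hre]
      have hsplit : ∀ k ∈ R2, (ψs c (n+m-k) * ψ b k) v
          = no c b (n+m-k) k v
            + (if b = c ∧ k = -(n+m-k) ∧ k < 0 then v else 0) := by
        intro k _
        rw [hno' c b (n+m-k) k]
        simp only [LinearMap.sub_apply]
        split
        · simp
        · simp
      rw [Finset.sum_congr rfl hsplit, Finset.sum_add_distrib]
      congr 1
      · rw [hScbs]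
        refine (Finset.sum_subset (fun x hx => ?_) (fun x _ hx' => hScb0 x hx')).symm
        have := hScbb x hx
        rw [hR2, Finset.mem_Icc]; omega
      · by_cases hcond : b = c ∧ n + m = 0
        · rw [if_pos ⟨hcond.1, hcond.2⟩]
          have : ∀ k ∈ R2, (if b = c ∧ k = -(n+m-k) ∧ k < 0 then v else 0)
              = if k < 0 then v else 0 := by
            intro k _
            by_cases hk : k < 0
            · rw [if_pos hk, if_pos ⟨hcond.1, by omega, hk⟩]
            · rw [if_neg hk, if_neg (by rintro ⟨-, -, h⟩; exact hk h)]
          rw [Finset.sum_congr rfl this, ← Finset.sum_filter, Finset.sum_const]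
        · rw [if_neg (by rintro ⟨h1, h2⟩; exact hcond ⟨h1, h2⟩)]
          refine Finset.sum_eq_zero fun k _ => ?_
          rw [if_neg (by rintro ⟨h1, h2, -⟩; exact hcond ⟨h1, by omega⟩)]
    · simp only [had, false_and, if_neg (fun h : (a = d ∧ _) => had h.1), if_false]
      simp
  rw [hL, hSum1, hSum2]
  -- the right-hand side applied to `v`
  have hR : ((if b = c then E a d (n + m) else 0) -
      (if a = d then E c b (n + m) else 0) +
      (if n = -m ∧ a = d ∧ b = c then (n : ℂ) • (1 : Module.End ℂ M) else 0)) v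
      = (if b = c then E a d (n+m) v else 0) - (if a = d then E c b (n+m) v else 0)
        + (if n = -m ∧ a = d ∧ b = c then (n : ℂ) • v else 0) := by
    simp only [LinearMap.add_apply, LinearMap.sub_apply]
    congr 1
    · congr 1 <;> (split <;> simp)
    · split <;> simp
  rw [hR]
  -- reduce to the central-term computation
  have haux : ∀ (X Y p q Z : M), p - q = Z → (X + p) - (Y + q) = (X - Y) + Z := by
    intro X Y p q Z hZ; rw [← hZ]; abel
  by_cases h : a = d ∧ b = c ∧ n + m = 0
  · obtain ⟨had, hbc, hnm⟩ := h
    have c1 : b = c ∧ d = a ∧ n + m = 0 := ⟨hbc, had.symm, hnm⟩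
    have c2 : a = d ∧ b = c ∧ n + m = 0 := ⟨had, hbc, hnm⟩
    have c3 : n = -m ∧ a = d ∧ b = c := ⟨by omega, had, hbc⟩
    rw [if_pos c1, if_pos c2, if_pos c3]
    have hcount : ((R1.filter (fun r => r < 0)).card : ℤ)
        - ((R2.filter (fun r => r < 0)).card : ℤ) = n := by
      have h1 : R1.filter (fun r => r < 0)
          = Finset.Icc (max (-N) (-N+m)) (min (min N (N+m)) (-1)) := by
        ext x
        simp only [Finset.mem_filter, hR1, Finset.mem_Icc]
        omega
      have h2 : R2.filter (fun r => r < 0)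
          = Finset.Icc (max (-N) (-N+n)) (min (min N (N+n)) (-1)) := by
        ext x
        simp only [Finset.mem_filter, hR2, Finset.mem_Icc]
        omega
      rw [h1, h2, Int.card_Icc, Int.card_Icc]
      omega
    have : ((R1.filter (fun r => r < 0)).card) • v - ((R2.filter (fun r => r < 0)).card) • v
        = (n : ℂ) • v := by
      rw [← natCast_zsmul v, ← natCast_zsmul v, ← sub_smul, hcount, Int.cast_smul_eq_zsmul]
    exact haux _ _ _ _ _ this
  · have hiff : ¬ (n = -m ∧ a = d ∧ b = c) := by
      rintro ⟨h1, h2, h3⟩; exact h ⟨h2, h3, by omega⟩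
    rw [if_neg hiff,
      if_neg (show ¬(b = c ∧ d = a ∧ n + m = 0) from
        fun hh => h ⟨hh.2.1.symm, hh.1, hh.2.2⟩),
      if_neg (show ¬(a = d ∧ b = c ∧ n + m = 0) from fun hh => h hh)]
    rw [add_zero, add_zero, add_zero]
end

section
/- Let Q_c be the invertible linear map of the fermionic Fock space determined by Q_c(x|0⟩) = Q̂_c(x) ψ_{c,−1}|0⟩, where Q̂_c is the algebra automorphism with Q̂_c(ψ_{b,n}) = ψ_{b,n−δ_{bc}} and Q̂_c(ψ*_{b,n}) = ψ*_{b,n+δ_{bc}}, and let Q_c^{−1}(x|0⟩) = Q̂_c^{−1}(x) ψ*_{c,0}|0⟩. Then for every x in the fermion algebra and every v ∈ F^s, Q̂_c(x) v = Q_c x Q_c^{−1} v. -/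
/-- Let `Q̂_c` be the shift automorphism of the fermion algebra,
`Q̂_c(ψ_{b,n}) = ψ_{b,n−δ_{bc}}`, `Q̂_c(ψ*_{b,n}) = ψ*_{b,n+δ_{bc}}`, and let
`Q_c`, `Q_c⁻¹` be the linear maps of the Fock space determined by
`Q_c(x|0⟩) = Q̂_c(x) ψ_{c,−1}|0⟩` and `Q_c⁻¹(x|0⟩) = Q̂_c⁻¹(x) ψ*_{c,0}|0⟩`.
Then for every `x` in the fermion algebra and every `v ∈ F^s`,
`Q̂_c(x) v = Q_c x Q_c⁻¹ v`. -/
theorem shift_operator_conjugation {A : Type*} [Ring A] [Algebra ℂ A]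
    {M : Type*} [AddCommGroup M] [Module ℂ M] {s : ℕ}
    (ψ ψs : Fin s → ℤ → A)
    (hψψ : ∀ (a b : Fin s) (n m : ℤ), ψ a n * ψ b m + ψ b m * ψ a n = 0)
    (hψsψs : ∀ (a b : Fin s) (n m : ℤ), ψs a n * ψs b m + ψs b m * ψs a n = 0)
    (hψψs : ∀ (a b : Fin s) (n m : ℤ),
      ψ a n * ψs b m + ψs b m * ψ a n = if a = b ∧ n = -m then 1 else 0)
    -- `F^s` as a module over the fermion algebra, generated by the vacuum
    (ρ : A →ₐ[ℂ] Module.End ℂ M) (vac : M)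
    (hvac : ∀ (c : Fin s) (n : ℤ), 0 ≤ n → ρ (ψ c n) vac = 0)
    (hvacs : ∀ (c : Fin s) (m : ℤ), 0 < m → ρ (ψs c m) vac = 0)
    (hgen : ∀ v : M, ∃ x : A, ρ x vac = v)
    -- the shift automorphism `Q̂_c`
    (c : Fin s) (Qhat : A ≃ₐ[ℂ] A)
    (hQhatψ : ∀ (b : Fin s) (n : ℤ),
      Qhat (ψ b n) = ψ b (n - if b = c then 1 else 0))
    (hQhatψs : ∀ (b : Fin s) (n : ℤ),
      Qhat (ψs b n) = ψs b (n + if b = c then 1 else 0))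
    -- the operators `Q_c` and `Q_c⁻¹` on the Fock space
    (Qc QcInv : M →ₗ[ℂ] M)
    (hQc : ∀ x : A, Qc (ρ x vac) = ρ (Qhat x * ψ c (-1)) vac)
    (hQcInv : ∀ x : A, QcInv (ρ x vac) = ρ (Qhat.symm x * ψs c 0) vac) :
    ∀ (x : A) (v : M), ρ (Qhat x) v = Qc (ρ x (QcInv v)) := by
  intro x v
  obtain ⟨y, rfl⟩ := hgen v
  have hmul : ∀ (a b : A), ρ a (ρ b vac) = ρ (a * b) vac := by
    intro a b; rw [map_mul]; rfl
  rw [hQcInv, hmul, hmul x, hQc]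
  have h2 : Qhat (x * (Qhat.symm y * ψs c 0)) = Qhat x * y * ψs c 1 := by
    rw [map_mul, map_mul, AlgEquiv.apply_symm_apply, hQhatψs c 0, if_pos rfl,
      mul_assoc]
    norm_num
  rw [h2]
  have hcomm : ψs c 1 * ψ c (-1) = 1 - ψ c (-1) * ψs c 1 := by
    have h := hψψs c c (-1) 1
    rw [if_pos ⟨rfl, rfl⟩] at h
    exact eq_sub_of_add_eq' h
  have : Qhat x * y * ψs c 1 * ψ c (-1)
      = Qhat x * y - (Qhat x * y * ψ c (-1)) * ψs c 1 := by
    rw [mul_assoc, hcomm]; noncomm_ring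
  rw [this, map_sub]
  have hz : ρ (Qhat x * y * ψ c (-1) * ψs c 1) vac = 0 := by
    rw [← hmul, hvacs c 1 one_pos, map_zero]
  simp only [LinearMap.sub_apply] at *
  rw [hz, sub_zero]
end

section
/- Let f: C^{N+s} → (C^s)^{⊗(N+s)} be a multilinear-coefficient polynomial that is antisymmetric under the simultaneous exchange σ_{ij} of variables and tensor factors. Define ω_N(f)(x_1,…,x_N) = (1^{⊗N} ⊗ e_1^⊥ ⊗ ··· ⊗ e_s^⊥) f(x_1,…,x_N, 0,…,0) / (x_1···x_N). Then ω_N(f) is a well-defined (C^s)^{⊗N}-valued polynomial that is again antisymmetric under simultaneous exchanges σ_{ij}, 1 ≤ i < j ≤ N. -/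
open MvPolynomial

private lemma aeval_update_monomial {n : ℕ} (i : Fin n) (d : Fin n →₀ ℕ) (r : ℂ) :
    aeval (Function.update X i (0 : MvPolynomial (Fin n) ℂ)) (monomial d r)
      = if d i = 0 then monomial d r else 0 := by
  rw [aeval_monomial]
  split_ifs with h
  · have hupd : ∀ a : Fin n,
        Function.update X i (0 : MvPolynomial (Fin n) ℂ) a ^ d a = X a ^ d a := by
      intro a
      rcases eq_or_ne a i with rfl | ha
      · rw [h]
        simp
      · rw [Function.update_of_ne ha]
    rw [monomial_eq, algebraMap_eq]
    congr 1
    exact Finset.prod_congr rfl fun a _ => hupd a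
  · have hi : i ∈ d.support := Finsupp.mem_support_iff.mpr h
    rw [Finsupp.prod, Finset.prod_eq_zero hi (by simp [zero_pow h]), mul_zero]

private lemma coeff_aeval_update {n : ℕ} (p : MvPolynomial (Fin n) ℂ) (i : Fin n)
    (m : Fin n →₀ ℕ) (hm : m i = 0) :
    coeff m (aeval (Function.update X i (0 : MvPolynomial (Fin n) ℂ)) p) = coeff m p := by
  conv_lhs => rw [p.as_sum]
  conv_rhs => rw [p.as_sum]
  rw [map_sum, coeff_sum, coeff_sum]
  refine Finset.sum_congr rfl fun d _ => ?_
  rw [aeval_update_monomial]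
  split_ifs with h
  · rfl
  · rw [coeff_zero, coeff_monomial, if_neg]
    rintro rfl
    exact h hm

private lemma X_dvd_iff_aeval_update {n : ℕ} (p : MvPolynomial (Fin n) ℂ) (i : Fin n) :
    X i ∣ p ↔ aeval (Function.update X i (0 : MvPolynomial (Fin n) ℂ)) p = 0 := by
  constructor
  · rintro ⟨q, rfl⟩
    rw [map_mul, aeval_X, Function.update_self, zero_mul]
  · intro h
    rw [X_dvd_iff_modMonomial_eq_zero]
    ext m
    by_cases hle : Finsupp.single i 1 ≤ m
    · rw [coeff_modMonomial_of_le _ hle, coeff_zero]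
    · rw [coeff_modMonomial_of_not_le _ hle, coeff_zero]
      have hm : m i = 0 := by
        by_contra hm
        exact hle (Finsupp.single_le_iff.mpr (Nat.one_le_iff_ne_zero.mpr hm))
      rw [← coeff_aeval_update p i m hm, h, coeff_zero]

private lemma aeval_eq_of_eq {n m : ℕ} (u w : Fin n → MvPolynomial (Fin m) ℂ)
    (h : ∀ k, u k = w k) (p : MvPolynomial (Fin n) ℂ) : aeval u p = aeval w p := by
  rw [funext h]

private lemma prod_X_dvd {n : ℕ} (t : Finset (Fin n)) (p : MvPolynomial (Fin n) ℂ)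
    (h : ∀ i ∈ t, X i ∣ p) : (∏ i ∈ t, X i) ∣ p := by
  classical
  induction t using Finset.induction_on generalizing p with
  | empty => simpa using one_dvd p
  | @insert a t ha ih =>
    obtain ⟨q, rfl⟩ := h a (Finset.mem_insert_self a t)
    rw [Finset.prod_insert ha]
    refine mul_dvd_mul_left _ (ih q fun i hi => ?_)
    have hia : i ≠ a := fun e => ha (e ▸ hi)
    have hdvd : X i ∣ X a * q := h i (Finset.mem_insert_of_mem hi)
    rw [X_dvd_iff_aeval_update] at hdvd ⊢
    rw [map_mul, aeval_X, Function.update_of_ne (Ne.symm hia)] at hdvd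
    exact (mul_eq_zero.mp hdvd).resolve_left (X_ne_zero a)

/-- Let `f` be a `(ℂ^s)^{⊗(N+s)}`-valued polynomial in
`x_1,…,x_{N+s}` (encoded by its components `f c` at tensor basis indices
`c : Fin (N+s) → Fin s`), antisymmetric under the simultaneous exchanges
`σ_{ij} = K_{ij} P_{ij}` of variables and tensor factors.  Then
`ω_N(f) = (1^{⊗N} ⊗ e_1^⊥ ⊗ ⋯ ⊗ e_s^⊥) f(x_1,…,x_N,0,…,0) / (x_1 ⋯ x_N)` is a
well-defined `(ℂ^s)^{⊗N}`-valued polynomial (each component of the numerator is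
divisible by `x_1 ⋯ x_N`) which is again antisymmetric under all `σ_{ij}`,
`1 ≤ i < j ≤ N`. -/
theorem omega_projection_well_defined_and_antisymmetric {N s : ℕ}
    (f : (Fin (N + s) → Fin s) → MvPolynomial (Fin (N + s)) ℂ)
    (hf : ∀ i j : Fin (N + s), i ≠ j → ∀ c,
      rename (Equiv.swap i j) (f (c ∘ Equiv.swap i j)) = - f c)
    -- the substitution  `x_i ↦ x_i (i ≤ N)`, `x_{N+k} ↦ 0`
    (ev0 : MvPolynomial (Fin (N + s)) ℂ →ₐ[ℂ] MvPolynomial (Fin N) ℂ)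
    (hev0 : ev0 = aeval (fun i : Fin (N + s) =>
      if h : (i : ℕ) < N then (X (⟨i, h⟩ : Fin N) : MvPolynomial (Fin N) ℂ) else 0))
    -- the tensor index extension selecting `e_1^⊥ ⊗ ⋯ ⊗ e_s^⊥` in the last slots
    (ext : (Fin N → Fin s) → (Fin (N + s) → Fin s))
    (hext : ∀ (c' : Fin N → Fin s) (i : Fin (N + s)),
      ext c' i = if h : (i : ℕ) < N then c' ⟨i, h⟩
        else ⟨(i : ℕ) - N, by have := i.isLt; omega⟩) :
    ∃ g : (Fin N → Fin s) → MvPolynomial (Fin N) ℂ,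
      (∀ c', (∏ i : Fin N, X i) * g c' = ev0 (f (ext c'))) ∧
      (∀ i j : Fin N, i ≠ j → ∀ c',
        rename (Equiv.swap i j) (g (c' ∘ Equiv.swap i j)) = - g c') := by
  classical
  subst hev0
  set v : Fin (N + s) → MvPolynomial (Fin N) ℂ := fun i =>
    if h : (i : ℕ) < N then X ⟨i, h⟩ else 0 with hv
  have hv_cast : ∀ k : Fin N, v (Fin.castAdd s k) = X k := by
    intro k
    simp only [hv]
    rw [dif_pos (by simp [k.isLt] : ((Fin.castAdd s k : Fin (N + s)) : ℕ) < N)]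
    congr 1
  have hv_nat : ∀ k : Fin s, v (Fin.natAdd N k) = 0 := by
    intro k
    simp only [hv]
    rw [dif_neg (by simp)]
  -- Step 1: divisibility
  have key : ∀ c', (∏ i : Fin N, X i) ∣ (aeval v) (f (ext c')) := by
    intro c'
    refine prod_X_dvd _ _ fun i _ => ?_
    rw [X_dvd_iff_aeval_update]
    have hab : Fin.castAdd s i ≠ Fin.natAdd N (c' i) := by
      intro e
      have := congrArg Fin.val e
      simp at this
      omega
    have hcomp : ext c' ∘ Equiv.swap (Fin.castAdd s i) (Fin.natAdd N (c' i)) = ext c' := by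
      funext j
      rcases eq_or_ne j (Fin.castAdd s i) with rfl | hja
      · rw [Function.comp_apply, Equiv.swap_apply_left, hext, hext]
        rw [dif_neg (by simp), dif_pos (by simp [i.isLt])]
        apply Fin.ext
        simp
      rcases eq_or_ne j (Fin.natAdd N (c' i)) with rfl | hjb
      · rw [Function.comp_apply, Equiv.swap_apply_right, hext, hext]
        rw [dif_pos (by simp [i.isLt]), dif_neg (by simp)]
        apply Fin.ext
        simp
      · rw [Function.comp_apply, Equiv.swap_apply_of_ne_of_ne hja hjb]
    have h1 := hf (Fin.castAdd s i) (Fin.natAdd N (c' i)) hab (ext c')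
    rw [hcomp] at h1
    have hswap :
        aeval (Function.update X i (0 : MvPolynomial (Fin N) ℂ))
            ((aeval v) (rename (Equiv.swap (Fin.castAdd s i) (Fin.natAdd N (c' i)))
              (f (ext c'))))
          = aeval (Function.update X i (0 : MvPolynomial (Fin N) ℂ))
              ((aeval v) (f (ext c'))) := by
      rw [aeval_rename, comp_aeval_apply, comp_aeval_apply]
      refine aeval_eq_of_eq _ _ (fun k => ?_) _
      simp only [Function.comp_apply]
      rcases eq_or_ne k (Fin.castAdd s i) with rfl | hka
      · rw [Equiv.swap_apply_left, hv_cast, hv_nat,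
          map_zero, aeval_X, Function.update_self]
      rcases eq_or_ne k (Fin.natAdd N (c' i)) with rfl | hkb
      · rw [Equiv.swap_apply_right, hv_cast, hv_nat,
          map_zero, aeval_X, Function.update_self]
      · rw [Equiv.swap_apply_of_ne_of_ne hka hkb]
    rw [h1, map_neg, map_neg] at hswap
    exact CharZero.neg_eq_self_iff.mp hswap
  -- Step 2: choose g
  refine ⟨fun c' => (key c').choose, fun c' => ((key c').choose_spec).symm, ?_⟩
  have hg : ∀ c', (aeval v) (f (ext c')) = (∏ i : Fin N, X i) * (key c').choose :=
    fun c' => (key c').choose_spec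
  intro i j hij c'
  have hprod_ne : (∏ k : Fin N, (X k : MvPolynomial (Fin N) ℂ)) ≠ 0 :=
    Finset.prod_ne_zero_iff.mpr fun k _ => X_ne_zero k
  apply mul_left_cancel₀ hprod_ne
  have hren : rename (Equiv.swap i j) (∏ k : Fin N, (X k : MvPolynomial (Fin N) ℂ))
      = ∏ k : Fin N, X k := by
    rw [map_prod]
    simp only [rename_X]
    exact Equiv.prod_comp (Equiv.swap i j) X
  have hab : Fin.castAdd s i ≠ Fin.castAdd s j := by
    intro e
    exact hij (Fin.ext (by simpa using congrArg Fin.val e))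
  have hswap_cast : ∀ k : Fin N,
      Equiv.swap (Fin.castAdd s i) (Fin.castAdd s j) (Fin.castAdd s k)
        = Fin.castAdd s (Equiv.swap i j k) :=
    fun k => (Fin.castAdd_injective N s).swap_apply i j k
  have hswap_nat : ∀ k : Fin s,
      Equiv.swap (Fin.castAdd s i) (Fin.castAdd s j) (Fin.natAdd N k)
        = Fin.natAdd N k := by
    intro k
    apply Equiv.swap_apply_of_ne_of_ne <;>
      · intro e
        have := congrArg Fin.val e
        simp at this
        omega
  have hdecomp : ∀ k : Fin (N + s),
      (∃ m : Fin N, k = Fin.castAdd s m) ∨ (∃ m : Fin s, k = Fin.natAdd N m) := by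
    intro k
    by_cases hk : (k : ℕ) < N
    · exact Or.inl ⟨⟨k, hk⟩, Fin.ext (by simp)⟩
    · exact Or.inr ⟨⟨(k : ℕ) - N, by have := k.isLt; omega⟩, Fin.ext (by simp; omega)⟩
  have hextswap : ext (c' ∘ Equiv.swap i j)
      = ext c' ∘ Equiv.swap (Fin.castAdd s i) (Fin.castAdd s j) := by
    funext k
    rcases hdecomp k with ⟨m, rfl⟩ | ⟨m, rfl⟩
    · rw [Function.comp_apply, hswap_cast, hext, hext]
      rw [dif_pos (by simp [m.isLt]), dif_pos (by simp [(Equiv.swap i j m).isLt])]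
      have h1 : (⟨((Fin.castAdd s m : Fin (N + s)) : ℕ), by simp [m.isLt]⟩ : Fin N) = m :=
        Fin.ext (by simp)
      have h2 : (⟨((Fin.castAdd s (Equiv.swap i j m) : Fin (N + s)) : ℕ),
          by simp [(Equiv.swap i j m).isLt]⟩ : Fin N) = Equiv.swap i j m :=
        Fin.ext (by simp)
      rw [h1, h2, Function.comp_apply]
    · rw [Function.comp_apply, hswap_nat, hext, hext]
      rw [dif_neg (by simp), dif_neg (by simp)]
  have hcommute :
      rename (Equiv.swap i j) ((aeval v) (f (ext (c' ∘ Equiv.swap i j))))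
        = (aeval v) (rename (Equiv.swap (Fin.castAdd s i) (Fin.castAdd s j))
            (f (ext c' ∘ Equiv.swap (Fin.castAdd s i) (Fin.castAdd s j)))) := by
    rw [aeval_rename, comp_aeval_apply, ← hextswap]
    refine aeval_eq_of_eq _ _ (fun k => ?_) _
    simp only [Function.comp_apply]
    rcases hdecomp k with ⟨m, rfl⟩ | ⟨m, rfl⟩
    · rw [hv_cast, rename_X, hswap_cast, hv_cast]
    · rw [hv_nat, map_zero, hswap_nat, hv_nat]
  have h1 := hf (Fin.castAdd s i) (Fin.castAdd s j) hab (ext c')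
  calc (∏ k : Fin N, (X k : MvPolynomial (Fin N) ℂ)) *
        rename (Equiv.swap i j) ((key (c' ∘ Equiv.swap i j)).choose)
      = rename (Equiv.swap i j)
          ((∏ k : Fin N, X k) * (key (c' ∘ Equiv.swap i j)).choose) := by
        rw [map_mul, hren]
    _ = rename (Equiv.swap i j) ((aeval v) (f (ext (c' ∘ Equiv.swap i j)))) :=
        congrArg _ (hg _).symm
    _ = (aeval v) (rename (Equiv.swap (Fin.castAdd s i) (Fin.castAdd s j))
          (f (ext c' ∘ Equiv.swap (Fin.castAdd s i) (Fin.castAdd s j)))) := hcommute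
    _ = - (aeval v) (f (ext c')) := by rw [h1, map_neg]
    _ = (∏ k : Fin N, X k) * (- (key c').choose) := by
        rw [mul_neg]
        exact congrArg Neg.neg (hg c')
end
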